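/- Let G be a tree (a finite, connected, acyclic simple graph) on vertex set V containing distinct vertices R and j, and let v be a vertex lying on the unique path from R to j with v ∉ {R, j}. Let C_R denote the vertex set of the connected component of R in G − v. Then the reduced density operator Tr_v ( |G⟩⟨G| ) on ⨂_{u∈V∖{v}} ℂ² is separable with respect to the bipartition ( C_R , V∖({v}∪C_R) ); moreover j ∈ V∖({v}∪C_R). -/

import Mathlib

open scoped BigOperators

noncomputable section

/-- The state space of a collection of qubits indexed by `V`:
amplitudes on computational-basis configurations `V → Bool`. -/
abbrev QState (V : Type*) := (V → Bool) → ℂ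

variable {V : Type*}

/-- The inner product `⟨ψ|φ⟩`. -/
def qInner [Fintype V] [DecidableEq V] (ψ φ : QState V) : ℂ :=
  ∑ x, starRingEnd ℂ (ψ x) * φ x

/-- Pauli `X` acting on qubit `a`. -/
def pauliX [DecidableEq V] (a : V) (ψ : QState V) : QState V :=
  fun x => ψ (Function.update x a (!x a))

/-- Pauli `Z` acting on qubit `a`. -/
def pauliZ (a : V) (ψ : QState V) : QState V :=
  fun x => (if x a then (-1 : ℂ) else 1) * ψ x

/-- Pauli `Y` acting on qubit `a`. -/
def pauliY [DecidableEq V] (a : V) (ψ : QState V) : QState V :=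
  fun x => (if x a then Complex.I else -Complex.I) * ψ (Function.update x a (!x a))

/-- The tensor product `⨂_{b ∈ s} Z^{(b)}` of Pauli `Z` over the qubits in `s`. -/
def pauliZProd (s : Finset V) (ψ : QState V) : QState V :=
  fun x => (∏ b ∈ s, if x b then (-1 : ℂ) else 1) * ψ x

/-- A tensor product over the qubits in `s` of the diagonal single-qubit gate
`diag (f false, f true)`. -/
def diagProd (s : Finset V) (f : Bool → ℂ) (ψ : QState V) : QState V :=
  fun x => (∏ b ∈ s, f (x b)) * ψ x

/-- The sign `(-1)^{x u · x v}` contributed by an edge `{u, v}`. -/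
def edgeSign (x : V → Bool) : Sym2 V → ℂ :=
  Sym2.lift ⟨fun a b => if x a && x b then (-1 : ℂ) else 1,
    fun a b => by simp [Bool.and_comm]⟩

/-- The graph state `|G⟩ = (∏_{{u,v}∈E} CZ^{(uv)}) ⨂_v |+⟩^{(v)}` of a finite simple graph,
written out in amplitudes. -/
def graphState [Fintype V] [DecidableEq V] (G : SimpleGraph V) [DecidableRel G.Adj] :
    QState V :=
  fun x => ((Real.sqrt 2 : ℝ) : ℂ)⁻¹ ^ (Fintype.card V) * ∏ e ∈ G.edgeFinset, edgeSign x e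

/-- Local complementation `τ_a(G)` of a graph `G` at the vertex `a`: complement the
adjacency among the neighbors of `a`, leaving all other adjacencies unchanged. -/
def localComp (G : SimpleGraph V) (a : V) : SimpleGraph V where
  Adj u v :=
    (G.Adj a u ∧ G.Adj a v ∧ u ≠ v ∧ ¬ G.Adj u v) ∨
      ((¬ (G.Adj a u ∧ G.Adj a v)) ∧ G.Adj u v)
  symm := by
    constructor
    intro u v h
    rcases h with ⟨h1, h2, h3, h4⟩ | ⟨h1, h2⟩
    · exact Or.inl ⟨h2, h1, h3.symm, fun h => h4 (G.adj_symm h)⟩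
    · exact Or.inr ⟨fun h => h1 ⟨h.2, h.1⟩, G.adj_symm h2⟩
  loopless := by
    constructor
    intro u h
    rcases h with ⟨_, _, h3, _⟩ | ⟨_, h2⟩
    · exact h3 rfl
    · exact G.irrefl h2

instance [DecidableEq V] (G : SimpleGraph V) [DecidableRel G.Adj] (a : V) :
    DecidableRel (localComp G a).Adj := fun u v =>
  inferInstanceAs (Decidable
    ((G.Adj a u ∧ G.Adj a v ∧ u ≠ v ∧ ¬ G.Adj u v) ∨
      ((¬ (G.Adj a u ∧ G.Adj a v)) ∧ G.Adj u v)))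

/-- The induced subgraph of `G` on the vertices satisfying `P`. -/
def inducedSub (G : SimpleGraph V) (P : V → Prop) : SimpleGraph {v : V // P v} :=
  SimpleGraph.comap Subtype.val G

instance (G : SimpleGraph V) [DecidableRel G.Adj] (P : V → Prop) :
    DecidableRel (inducedSub G P).Adj := fun u v =>
  inferInstanceAs (Decidable (G.Adj u.1 v.1))

/-- The eigenvectors `|Z,+⟩ = |0⟩`, `|Z,-⟩ = |1⟩` of Pauli `Z`
(`s = false` the `+1`-eigenvector, `s = true` the `-1`-eigenvector). -/
def zVec (s : Bool) : Bool → ℂ := fun c => if c = s then 1 else 0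

/-- The eigenvectors `|X,±⟩ = (|0⟩ ± |1⟩)/√2` of Pauli `X`
(`s = false` the `+1`-eigenvector, `s = true` the `-1`-eigenvector). -/
def xVec (s : Bool) : Bool → ℂ :=
  fun c => ((Real.sqrt 2 : ℝ) : ℂ)⁻¹ * (if c && s then -1 else 1)

/-- The eigenvectors `|Y,±⟩ = (|0⟩ ± i|1⟩)/√2` of Pauli `Y`
(`s = false` the `+1`-eigenvector, `s = true` the `-1`-eigenvector). -/
def yVec (s : Bool) : Bool → ℂ :=
  fun c => ((Real.sqrt 2 : ℝ) : ℂ)⁻¹ *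
    (if c then (if s then -Complex.I else Complex.I) else 1)

/-- The rank-one projector `|v⟩⟨v|` on qubit `a` (identity elsewhere),
for a single-qubit vector `v`. -/
def projDir [DecidableEq V] (a : V) (v : Bool → ℂ) (ψ : QState V) : QState V :=
  fun x => v (x a) *
    (starRingEnd ℂ (v false) * ψ (Function.update x a false) +
      starRingEnd ℂ (v true) * ψ (Function.update x a true))

/-- The tensor product `|v⟩^{(a)} ⊗ |φ⟩` of a single-qubit state on qubit `a` with a state
on the remaining qubits. -/
def tensorQubit [DecidableEq V] (a : V) (v : Bool → ℂ) (φ : QState {u : V // u ≠ a}) :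
    QState V :=
  fun x => v (x a) * φ (fun u => x u.1)

/-- Apply a single-qubit gate with matrix entries `m r c = ⟨r|M|c⟩` on qubit `a`. -/
def applyGate [DecidableEq V] (a : V) (m : Bool → Bool → ℂ) (ψ : QState V) : QState V :=
  fun x => m (x a) false * ψ (Function.update x a false) +
    m (x a) true * ψ (Function.update x a true)

/-- The square roots `√(±iY) = (I ± iY)/√2`
(`s = false` for `√(+iY)`, `s = true` for `√(-iY)`). -/
def sqrtiY (s : Bool) : Bool → Bool → ℂ :=
  fun r c => ((Real.sqrt 2 : ℝ) : ℂ)⁻¹ *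
    (if s then (if r = false ∧ c = true then -1 else 1)
     else (if r = true ∧ c = false then -1 else 1))

/-- The Hadamard gate. -/
def hadamard : Bool → Bool → ℂ :=
  fun r c => ((Real.sqrt 2 : ℝ) : ℂ)⁻¹ * (if r && c then -1 else 1)

/-- Apply a tensor product of single-qubit gates, one on each qubit. -/
def applyLocal [Fintype V] [DecidableEq V] (u : V → Bool → Bool → ℂ) (ψ : QState V) :
    QState V :=
  fun x => ∑ y : V → Bool, (∏ v, u v (x v) (y v)) * ψ y

/-- `2×2` matrix multiplication (matrices as `Bool → Bool → ℂ`). -/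
def matMul2 (a b : Bool → Bool → ℂ) : Bool → Bool → ℂ :=
  fun r c => ∑ k : Bool, a r k * b k c

/-- Adjoint of a `2×2` matrix. -/
def matAdj2 (a : Bool → Bool → ℂ) : Bool → Bool → ℂ := fun r c => starRingEnd ℂ (a c r)

def idMat : Bool → Bool → ℂ := fun r c => if r = c then 1 else 0
def xMat : Bool → Bool → ℂ := fun r c => if r = c then 0 else 1
def yMat : Bool → Bool → ℂ := fun r c => if r = c then 0 else if r then Complex.I else -Complex.I
def zMat : Bool → Bool → ℂ := fun r c => if r = c then (if r then -1 else 1) else 0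

/-- A `2×2` matrix is unitary. -/
def IsUnitary2 (u : Bool → Bool → ℂ) : Prop := matMul2 (matAdj2 u) u = idMat

/-- A single-qubit Clifford unitary: a unitary conjugating `X` and `Z` into
`i^k·P` with `P` a Pauli matrix. -/
def IsClifford1 (u : Bool → Bool → ℂ) : Prop :=
  IsUnitary2 u ∧
    (∃ (k : ℕ) (P : Bool → Bool → ℂ), P ∈ ({idMat, xMat, yMat, zMat} : Set _) ∧
      matMul2 (matMul2 u xMat) (matAdj2 u) = Complex.I ^ k • P) ∧
    (∃ (k : ℕ) (P : Bool → Bool → ℂ), P ∈ ({idMat, xMat, yMat, zMat} : Set _) ∧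
      matMul2 (matMul2 u zMat) (matAdj2 u) = Complex.I ^ k • P)

/-- The action of the `n`-qubit Pauli operator `c · ⨂_v X^{xv v} Z^{zv v}`. -/
def pauliAction [Fintype V] (c : ℂ) (xv zv : V → Bool) (ψ : QState V) : QState V :=
  fun s => c * (∏ v, if zv v && (xor (s v) (xv v)) then (-1 : ℂ) else 1) *
    ψ (fun v => xor (s v) (xv v))

/-- The outer product `|ψ⟩⟨φ|` as a matrix on configurations. -/
def outer (ψ φ : QState V) : (V → Bool) → (V → Bool) → ℂ :=
  fun x y => ψ x * starRingEnd ℂ (φ y)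

open Classical in
/-- Partial trace keeping the qubits that satisfy `P` (tracing out the others). -/
def ptraceKeep [Fintype V] [DecidableEq V] (P : V → Prop)
    (ρ : (V → Bool) → (V → Bool) → ℂ) :
    ({v : V // P v} → Bool) → ({v : V // P v} → Bool) → ℂ :=
  fun x y => ∑ z : {v : V // ¬ P v} → Bool,
    ρ (fun w => if h : P w then x ⟨w, h⟩ else z ⟨w, h⟩)
      (fun w => if h : P w then y ⟨w, h⟩ else z ⟨w, h⟩)

open Classical in
/-- Apply a product of single-qubit bras `⟨bra v|` to each qubit `v` satisfying `P`,
leaving a state on the remaining qubits. -/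
def applyBras [Fintype V] [DecidableEq V] (P : V → Prop) (bra : V → Bool → ℂ)
    (ψ : QState V) : QState {v : V // ¬ P v} :=
  fun x => ∑ z : {v : V // P v} → Bool,
    (∏ v : {v : V // P v}, bra v.1 (z v)) *
      ψ (fun w => if h : P w then z ⟨w, h⟩ else x ⟨w, h⟩)

/-- A density operator: hermitian, trace one, positive semidefinite. -/
def IsDensityOp {α : Type*} [Fintype α] [DecidableEq α]
    (ρ : (α → Bool) → (α → Bool) → ℂ) : Prop :=
  (∀ x y, starRingEnd ℂ (ρ y x) = ρ x y) ∧ (∑ x, ρ x x = 1) ∧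
    ∀ ψ : (α → Bool) → ℂ, ∃ r : ℝ, 0 ≤ r ∧
      (∑ x, ∑ y, starRingEnd ℂ (ψ x) * ρ x y * ψ y) = (r : ℂ)

open Classical in
/-- Separability of an operator on the qubits indexed by `α` with respect to the
bipartition `(A, Aᶜ)`: a finite convex combination of tensor products of density
operators. -/
def SeparableWrt {α : Type*} [Fintype α] [DecidableEq α] (A : Set α)
    (ρ : (α → Bool) → (α → Bool) → ℂ) : Prop :=
  ∃ (k : ℕ) (p : Fin k → ℝ)
    (σ : Fin k → ({a : α // a ∈ A} → Bool) → ({a : α // a ∈ A} → Bool) → ℂ)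
    (τ : Fin k → ({a : α // a ∉ A} → Bool) → ({a : α // a ∉ A} → Bool) → ℂ),
    (∀ i, 0 ≤ p i) ∧ (∑ i, p i = 1) ∧
    (∀ i, IsDensityOp (σ i)) ∧ (∀ i, IsDensityOp (τ i)) ∧
    ∀ x y, ρ x y = ∑ i, (p i : ℂ) *
      (σ i (fun a => x a.1) (fun a => y a.1) * τ i (fun a => x a.1) (fun a => y a.1))


instance {α : Type*} [DecidableEq α] (r : α → α → Prop) [DecidableRel r] :
    DecidableRel (SimpleGraph.fromRel r).Adj := fun a b =>
  inferInstanceAs (Decidable (a ≠ b ∧ (r a b ∨ r b a)))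

/-- The line graph on `{1, …, n}` (as `Fin n`) with edges between consecutive vertices. -/
def lineGraph (n : ℕ) : SimpleGraph (Fin n) :=
  SimpleGraph.fromRel (fun i j => (i : ℕ) + 1 = (j : ℕ))

instance (n : ℕ) : DecidableRel (lineGraph n).Adj := fun a b =>
  inferInstanceAs (Decidable (a ≠ b ∧ ((a : ℕ) + 1 = (b : ℕ) ∨ (b : ℕ) + 1 = (a : ℕ))))

/-- The extension `I_R ⊗ s` of an operator `s` on `n` qubits by the identity on an extra
reference qubit labelled `0`. -/
def liftOp {n : ℕ} (s : QState (Fin n) → QState (Fin n)) (ψ : QState (Fin (n + 1))) :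
    QState (Fin (n + 1)) :=
  fun x => s (fun y => ψ (Fin.cons (x 0) y)) (fun k => x k.succ)

end


noncomputable section AuxStmt11
open Classical

variable {V : Type*}

/-- Glue a bit `b` at vertex `v` onto a configuration of the other qubits. -/
def glue [DecidableEq V] (v : V) (b : Bool) (x : {u : V // u ≠ v} → Bool) : V → Bool :=
  fun w => if h : w ≠ v then x ⟨w, h⟩ else b

lemma glue_self [DecidableEq V] (v : V) (b : Bool) (x : {u : V // u ≠ v} → Bool) :
    glue v b x v = b := dif_neg (by simp)

lemma glue_ne [DecidableEq V] (v : V) (b : Bool) (x : {u : V // u ≠ v} → Bool)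
    {w : V} (h : w ≠ v) : glue v b x w = x ⟨w, h⟩ := dif_pos h

/-- Keep the values on `A`, zero elsewhere. -/
def maskIn [DecidableEq V] {v : V} (A : Set {u : V // u ≠ v})
    (x : {u : V // u ≠ v} → Bool) : {u : V // u ≠ v} → Bool :=
  fun t => if t ∈ A then x t else false

/-- Keep the values off `A`, zero on `A`. -/
def maskOut [DecidableEq V] {v : V} (A : Set {u : V // u ≠ v})
    (x : {u : V // u ≠ v} → Bool) : {u : V // u ≠ v} → Bool :=
  fun t => if t ∈ A then false else x t

def extendIn [DecidableEq V] {v : V} (A : Set {u : V // u ≠ v})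
    (xA : {a : {u : V // u ≠ v} // a ∈ A} → Bool) : {u : V // u ≠ v} → Bool :=
  fun t => if h : t ∈ A then xA ⟨t, h⟩ else false

def extendOut [DecidableEq V] {v : V} (A : Set {u : V // u ≠ v})
    (xB : {a : {u : V // u ≠ v} // a ∉ A} → Bool) : {u : V // u ≠ v} → Bool :=
  fun t => if h : t ∈ A then false else xB ⟨t, h⟩

lemma extendIn_restrict [DecidableEq V] {v : V} (A : Set {u : V // u ≠ v})
    (x : {u : V // u ≠ v} → Bool) :
    extendIn A (fun a => x a.1) = maskIn A x := by
  funext t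
  by_cases h : t ∈ A
  · rw [extendIn, dif_pos h, maskIn, if_pos h]
  · rw [extendIn, dif_neg h, maskIn, if_neg h]

lemma extendOut_restrict [DecidableEq V] {v : V} (A : Set {u : V // u ≠ v})
    (x : {u : V // u ≠ v} → Bool) :
    extendOut A (fun a => x a.1) = maskOut A x := by
  funext t
  by_cases h : t ∈ A
  · rw [extendOut, dif_pos h, maskOut, if_pos h]
  · rw [extendOut, dif_neg h, maskOut, if_neg h]

/-- The global sign `∏_e (-1)^{x_u x_w}` of a configuration. -/
def gSign [Fintype V] [DecidableEq V] (G : SimpleGraph V) [DecidableRel G.Adj]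
    (w : V → Bool) : ℂ :=
  ∏ e ∈ G.edgeFinset, edgeSign w e

lemma edgeSign_mk (x : V → Bool) (a c : V) :
    edgeSign x s(a, c) = if x a && x c then (-1 : ℂ) else 1 := rfl

lemma edgeSign_mul_self (x : V → Bool) (e : Sym2 V) :
    edgeSign x e * edgeSign x e = 1 := by
  induction e using Sym2.ind with
  | _ a c =>
    rw [edgeSign_mk]
    split_ifs <;> norm_num

lemma edgeSign_conj (x : V → Bool) (e : Sym2 V) :
    starRingEnd ℂ (edgeSign x e) = edgeSign x e := by
  induction e using Sym2.ind with
  | _ a c =>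
    rw [edgeSign_mk]
    split_ifs <;> simp

lemma gSign_mul_self [Fintype V] [DecidableEq V] (G : SimpleGraph V) [DecidableRel G.Adj]
    (w : V → Bool) : gSign G w * gSign G w = 1 := by
  rw [gSign, ← Finset.prod_mul_distrib]
  exact Finset.prod_eq_one fun e _ => edgeSign_mul_self w e

lemma gSign_conj [Fintype V] [DecidableEq V] (G : SimpleGraph V) [DecidableRel G.Adj]
    (w : V → Bool) : starRingEnd ℂ (gSign G w) = gSign G w := by
  rw [gSign, map_prod]
  exact Finset.prod_congr rfl fun e _ => edgeSign_conj w e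

lemma graphState_eq_gSign [Fintype V] [DecidableEq V] (G : SimpleGraph V)
    [DecidableRel G.Adj] (w : V → Bool) :
    graphState G w = ((Real.sqrt 2 : ℝ) : ℂ)⁻¹ ^ (Fintype.card V) * gSign G w := rfl

/-- The key multiplicativity of the sign across the bipartition. -/
lemma gSign_mask_mul [Fintype V] [DecidableEq V] (G : SimpleGraph V) [DecidableRel G.Adj]
    (v : V) (A : Set {u : V // u ≠ v})
    (hA : ∀ (a c : V) (ha : a ≠ v) (hc : c ≠ v), G.Adj a c →
      ((⟨a, ha⟩ : {u : V // u ≠ v}) ∈ A ↔ (⟨c, hc⟩ : {u : V // u ≠ v}) ∈ A))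
    (b : Bool) (x : {u : V // u ≠ v} → Bool) :
    gSign G (glue v b (maskIn A x)) * gSign G (glue v b (maskOut A x))
      = gSign G (glue v b x) := by
  rw [gSign, gSign, gSign, ← Finset.prod_mul_distrib]
  refine Finset.prod_congr rfl ?_
  intro e he
  induction e using Sym2.ind with
  | _ a c =>
    have hadj : G.Adj a c := by
      rwa [SimpleGraph.mem_edgeFinset, SimpleGraph.mem_edgeSet] at he
    rw [edgeSign_mk, edgeSign_mk, edgeSign_mk]
    by_cases ha : a = v
    · rw [ha] at hadj ⊢
      have hc : c ≠ v := hadj.ne'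
      rw [glue_self, glue_self, glue_self, glue_ne v b _ hc, glue_ne v b _ hc,
        glue_ne v b _ hc]
      by_cases hm : (⟨c, hc⟩ : {u : V // u ≠ v}) ∈ A
      · rw [maskIn, if_pos hm, maskOut, if_pos hm]
        cases b <;> cases x ⟨c, hc⟩ <;> norm_num
      · rw [maskIn, if_neg hm, maskOut, if_neg hm]
        cases b <;> cases x ⟨c, hc⟩ <;> norm_num
    · by_cases hc : c = v
      · rw [hc] at hadj ⊢
        have ha' : a ≠ v := hadj.ne
        rw [glue_self, glue_self, glue_self, glue_ne v b _ ha', glue_ne v b _ ha',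
          glue_ne v b _ ha']
        by_cases hm : (⟨a, ha'⟩ : {u : V // u ≠ v}) ∈ A
        · rw [maskIn, if_pos hm, maskOut, if_pos hm]
          cases b <;> cases x ⟨a, ha'⟩ <;> norm_num
        · rw [maskIn, if_neg hm, maskOut, if_neg hm]
          cases b <;> cases x ⟨a, ha'⟩ <;> norm_num
      · rw [glue_ne v b _ ha, glue_ne v b _ ha, glue_ne v b _ ha,
          glue_ne v b _ hc, glue_ne v b _ hc, glue_ne v b _ hc]
        have hiff := hA a c ha hc hadj
        by_cases hm : (⟨a, ha⟩ : {u : V // u ≠ v}) ∈ A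
        · have hm' := hiff.mp hm
          rw [maskIn, maskIn, if_pos hm, if_pos hm', maskOut, maskOut, if_pos hm,
            if_pos hm']
          cases x ⟨a, ha⟩ <;> cases x ⟨c, hc⟩ <;> norm_num
        · have hm' : (⟨c, hc⟩ : {u : V // u ≠ v}) ∉ A := fun h => hm (hiff.mpr h)
          rw [maskIn, maskIn, if_neg hm, if_neg hm', maskOut, maskOut, if_neg hm,
            if_neg hm']
          cases x ⟨a, ha⟩ <;> cases x ⟨c, hc⟩ <;> norm_num

/-- A pure state with flat amplitudes is a density operator. -/
lemma isDensityOp_outer {α : Type*} [Fintype α] [DecidableEq α] (u : (α → Bool) → ℂ)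
    (h : ∀ x, u x * starRingEnd ℂ (u x) = (2 : ℂ)⁻¹ ^ Fintype.card α) :
    IsDensityOp (outer u u) := by
  refine ⟨?_, ?_, ?_⟩
  · intro x y
    simp only [outer, map_mul, RingHomCompTriple.comp_apply, Complex.conj_conj,
      RingHom.id_apply]
    ring
  · calc ∑ x, outer u u x x = ∑ _x : α → Bool, (2 : ℂ)⁻¹ ^ Fintype.card α :=
        Finset.sum_congr rfl fun x _ => h x
      _ = 1 := by
        rw [Finset.sum_const, Finset.card_univ, Fintype.card_fun, Fintype.card_bool,
          nsmul_eq_mul]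
        push_cast
        rw [← mul_pow]
        norm_num
  · intro ψ
    refine ⟨Complex.normSq (∑ x, starRingEnd ℂ (ψ x) * u x), Complex.normSq_nonneg _, ?_⟩
    rw [← Complex.mul_conj]
    rw [map_sum, Finset.sum_mul_sum]
    refine Finset.sum_congr rfl fun x _ => Finset.sum_congr rfl fun y _ => ?_
    simp only [outer, map_mul, RingHomCompTriple.comp_apply, Complex.conj_conj,
      RingHom.id_apply]
    ring

end AuxStmt11


noncomputable section AuxStmt11b
open Classical

variable {V : Type*}

def uVec [Fintype V] [DecidableEq V] (G : SimpleGraph V) [DecidableRel G.Adj]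
    (v : V) (A : Set {u : V // u ≠ v}) (b : Bool)
    (xA : {a : {u : V // u ≠ v} // a ∈ A} → Bool) : ℂ :=
  ((Real.sqrt 2 : ℝ) : ℂ)⁻¹ ^ (Fintype.card {a : {u : V // u ≠ v} // a ∈ A}) *
    gSign G (glue v b (extendIn A xA))

def wVec [Fintype V] [DecidableEq V] (G : SimpleGraph V) [DecidableRel G.Adj]
    (v : V) (A : Set {u : V // u ≠ v}) (b : Bool)
    (xB : {a : {u : V // u ≠ v} // a ∉ A} → Bool) : ℂ :=
  ((Real.sqrt 2 : ℝ) : ℂ)⁻¹ ^ (Fintype.card {a : {u : V // u ≠ v} // a ∉ A}) *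
    gSign G (glue v b (extendOut A xB))

lemma sqrt2_mul_self : (((Real.sqrt 2 : ℝ) : ℂ)) * ((Real.sqrt 2 : ℝ) : ℂ) = 2 := by
  rw [← Complex.ofReal_mul, Real.mul_self_sqrt (by norm_num)]
  norm_num

lemma sqrt2_inv_pow_mul (m : ℕ) :
    ((Real.sqrt 2 : ℝ) : ℂ)⁻¹ ^ m * ((Real.sqrt 2 : ℝ) : ℂ)⁻¹ ^ m = (2 : ℂ)⁻¹ ^ m := by
  rw [← mul_pow, ← mul_inv, sqrt2_mul_self]

lemma conj_sqrt2_inv_pow (m : ℕ) :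
    starRingEnd ℂ (((Real.sqrt 2 : ℝ) : ℂ)⁻¹ ^ m) = ((Real.sqrt 2 : ℝ) : ℂ)⁻¹ ^ m := by
  rw [map_pow, map_inv₀, Complex.conj_ofReal]

lemma uVec_conj [Fintype V] [DecidableEq V] (G : SimpleGraph V) [DecidableRel G.Adj]
    (v : V) (A : Set {u : V // u ≠ v}) (b : Bool)
    (xA : {a : {u : V // u ≠ v} // a ∈ A} → Bool) :
    starRingEnd ℂ (uVec G v A b xA) = uVec G v A b xA := by
  rw [uVec, map_mul, conj_sqrt2_inv_pow, gSign_conj]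

lemma wVec_conj [Fintype V] [DecidableEq V] (G : SimpleGraph V) [DecidableRel G.Adj]
    (v : V) (A : Set {u : V // u ≠ v}) (b : Bool)
    (xB : {a : {u : V // u ≠ v} // a ∉ A} → Bool) :
    starRingEnd ℂ (wVec G v A b xB) = wVec G v A b xB := by
  rw [wVec, map_mul, conj_sqrt2_inv_pow, gSign_conj]

lemma uVec_norm [Fintype V] [DecidableEq V] (G : SimpleGraph V) [DecidableRel G.Adj]
    (v : V) (A : Set {u : V // u ≠ v}) (b : Bool)
    (xA : {a : {u : V // u ≠ v} // a ∈ A} → Bool) :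
    uVec G v A b xA * starRingEnd ℂ (uVec G v A b xA)
      = (2 : ℂ)⁻¹ ^ (Fintype.card {a : {u : V // u ≠ v} // a ∈ A}) := by
  rw [uVec_conj, uVec, mul_mul_mul_comm, sqrt2_inv_pow_mul, gSign_mul_self, mul_one]

lemma wVec_norm [Fintype V] [DecidableEq V] (G : SimpleGraph V) [DecidableRel G.Adj]
    (v : V) (A : Set {u : V // u ≠ v}) (b : Bool)
    (xB : {a : {u : V // u ≠ v} // a ∉ A} → Bool) :
    wVec G v A b xB * starRingEnd ℂ (wVec G v A b xB)
      = (2 : ℂ)⁻¹ ^ (Fintype.card {a : {u : V // u ≠ v} // a ∉ A}) := by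
  rw [wVec_conj, wVec, mul_mul_mul_comm, sqrt2_inv_pow_mul, gSign_mul_self, mul_one]

lemma card_split [Fintype V] [DecidableEq V] (v : V) (A : Set {u : V // u ≠ v}) :
    Fintype.card V = Fintype.card {a : {u : V // u ≠ v} // a ∈ A} +
      Fintype.card {a : {u : V // u ≠ v} // a ∉ A} + 1 := by
  have h1 := Fintype.card_congr (Equiv.sumCompl (fun a : {u : V // u ≠ v} => a ∈ A))
  rw [Fintype.card_sum] at h1
  have h2 := Fintype.card_congr (Equiv.sumCompl (fun u : V => u = v))
  rw [Fintype.card_sum, Fintype.card_subtype_eq] at h2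
  have h3 : Fintype.card {u : V // ¬ u = v} = Fintype.card {u : V // u ≠ v} :=
    Fintype.card_congr (Equiv.refl _)
  omega

/-- The pointwise identity underlying the separable decomposition. -/
lemma main_pointwise [Fintype V] [DecidableEq V] (G : SimpleGraph V) [DecidableRel G.Adj]
    (v : V) (A : Set {u : V // u ≠ v})
    (hA : ∀ (a c : V) (ha : a ≠ v) (hc : c ≠ v), G.Adj a c →
      ((⟨a, ha⟩ : {u : V // u ≠ v}) ∈ A ↔ (⟨c, hc⟩ : {u : V // u ≠ v}) ∈ A))
    (b : Bool) (x y : {u : V // u ≠ v} → Bool) :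
    graphState G (glue v b x) * starRingEnd ℂ (graphState G (glue v b y))
      = ((1/2 : ℝ) : ℂ) *
          (uVec G v A b (fun a => x a.1) * starRingEnd ℂ (uVec G v A b (fun a => y a.1)) *
            (wVec G v A b (fun a => x a.1) * starRingEnd ℂ (wVec G v A b (fun a => y a.1)))) := by
  rw [uVec_conj, wVec_conj]
  rw [uVec, uVec, wVec, wVec, extendIn_restrict, extendOut_restrict,
    extendIn_restrict, extendOut_restrict]
  rw [graphState_eq_gSign, graphState_eq_gSign, map_mul, conj_sqrt2_inv_pow, gSign_conj]
  have hkx := gSign_mask_mul G v A hA b x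
  have hky := gSign_mask_mul G v A hA b y
  rw [← hkx, ← hky]
  have hs : ((1/2 : ℝ) : ℂ) *
      ((((Real.sqrt 2 : ℝ) : ℂ)⁻¹ ^ (Fintype.card {a : {u : V // u ≠ v} // a ∈ A}) *
        ((Real.sqrt 2 : ℝ) : ℂ)⁻¹ ^ (Fintype.card {a : {u : V // u ≠ v} // a ∈ A})) *
       (((Real.sqrt 2 : ℝ) : ℂ)⁻¹ ^ (Fintype.card {a : {u : V // u ≠ v} // a ∉ A}) *
        ((Real.sqrt 2 : ℝ) : ℂ)⁻¹ ^ (Fintype.card {a : {u : V // u ≠ v} // a ∉ A})))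
      = ((Real.sqrt 2 : ℝ) : ℂ)⁻¹ ^ (Fintype.card V) *
          ((Real.sqrt 2 : ℝ) : ℂ)⁻¹ ^ (Fintype.card V) := by
    rw [sqrt2_inv_pow_mul, sqrt2_inv_pow_mul, sqrt2_inv_pow_mul, card_split v A,
      pow_add, pow_add, pow_one]
    push_cast
    ring
  calc ((Real.sqrt 2 : ℝ) : ℂ)⁻¹ ^ (Fintype.card V) *
        (gSign G (glue v b (maskIn A x)) * gSign G (glue v b (maskOut A x))) *
        (((Real.sqrt 2 : ℝ) : ℂ)⁻¹ ^ (Fintype.card V) *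
          (gSign G (glue v b (maskIn A y)) * gSign G (glue v b (maskOut A y))))
      = (((Real.sqrt 2 : ℝ) : ℂ)⁻¹ ^ (Fintype.card V) *
          ((Real.sqrt 2 : ℝ) : ℂ)⁻¹ ^ (Fintype.card V)) *
          ((gSign G (glue v b (maskIn A x)) * gSign G (glue v b (maskOut A x))) *
            (gSign G (glue v b (maskIn A y)) * gSign G (glue v b (maskOut A y)))) := by
        ring
    _ = _ := by
        rw [← hs]
        ring

lemma glue_ext [DecidableEq V] (v : V) {b : Bool} (t : {u : V // u ≠ v} → Bool)
    (f : V → Bool) (h1 : ∀ w (h : w ≠ v), f w = t ⟨w, h⟩) (h2 : f v = b) :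
    f = glue v b t := by
  funext w
  by_cases h : w ≠ v
  · rw [h1 w h, glue_ne v b t h]
  · have hw : w = v := not_not.mp h
    subst hw
    rw [h2, glue_self]

lemma sum_eval_single {T : Type*} (I : Fintype (T → Bool)) (t0 : T)
    (hT : ∀ t : T, t = t0) (g : Bool → ℂ) :
    @Finset.sum _ ℂ _ (@Finset.univ _ I) (fun z => g (z t0)) = g false + g true := by
  letI : DecidableEq T := fun a b => isTrue (by rw [hT a, hT b])
  letI : Fintype T := ⟨{t0}, fun t => by rw [hT t]; exact Finset.mem_singleton_self t0⟩
  rw [Subsingleton.elim I (Pi.instFintype)]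
  refine (@Fintype.sum_equiv (T → Bool) Bool ℂ (Pi.instFintype) Bool.fintype _
    ⟨fun z => z t0, fun b _ => b, fun z => funext fun t => by rw [hT t], fun _ => rfl⟩
    (fun z => g (z t0)) g (fun z => rfl)).trans ?_
  rw [Fintype.sum_bool, add_comm]

set_option maxHeartbeats 1000000 in
/-- Separability of the reduced graph state across an adjacency-closed bipartition. -/
lemma separable_of_compat [Fintype V] [DecidableEq V] (G : SimpleGraph V)
    [DecidableRel G.Adj] (v : V) (A : Set {u : V // u ≠ v})
    (hA : ∀ (a c : V) (ha : a ≠ v) (hc : c ≠ v), G.Adj a c →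
      ((⟨a, ha⟩ : {u : V // u ≠ v}) ∈ A ↔ (⟨c, hc⟩ : {u : V // u ≠ v}) ∈ A)) :
    SeparableWrt A (ptraceKeep (· ≠ v) (outer (graphState G) (graphState G))) := by
  refine ⟨2, fun _ => 1/2,
    fun i => outer (uVec G v A ((![false, true] : Fin 2 → Bool) i))
      (uVec G v A ((![false, true] : Fin 2 → Bool) i)),
    fun i => outer (wVec G v A ((![false, true] : Fin 2 → Bool) i))
      (wVec G v A ((![false, true] : Fin 2 → Bool) i)),
    fun i => by norm_num, by norm_num [Fin.sum_univ_two], ?_, ?_, ?_⟩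
  · intro i
    exact isDensityOp_outer _ (uVec_norm G v A _)
  · intro i
    exact isDensityOp_outer _ (wVec_norm G v A _)
  · intro x y
    have hvmem : ¬ (v ≠ v) := fun h => h rfl
    let E : ({w : V // ¬ w ≠ v} → Bool) ≃ Bool :=
      { toFun := fun z => z ⟨v, hvmem⟩
        invFun := fun b _ => b
        left_inv := by
          intro z
          funext t
          have ht : t = ⟨v, hvmem⟩ := Subtype.ext (not_not.mp t.2)
          rw [ht]
        right_inv := fun b => rfl }
    calc ptraceKeep (· ≠ v) (outer (graphState G) (graphState G)) x y
        = ∑ b : Bool, graphState G (glue v b x) *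
            starRingEnd ℂ (graphState G (glue v b y)) := by
          simp only [ptraceKeep, outer]
          refine (Finset.sum_congr rfl fun z _ => ?_).trans
            ((sum_eval_single (T := {w : V // ¬ w ≠ v}) _ ⟨v, hvmem⟩
              (fun t => Subtype.ext (not_not.mp t.2))
              (fun b => graphState G (glue v b x) *
                starRingEnd ℂ (graphState G (glue v b y)))).trans ?_)
          · refine congrArg₂ (· * ·) (congrArg (graphState G) ?_)
              (congrArg (fun g => starRingEnd ℂ (graphState G g)) ?_)
            · exact glue_ext v x _ (fun w h => dif_pos h) (dif_neg hvmem)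
            · exact glue_ext v y _ (fun w h => dif_pos h) (dif_neg hvmem)
          · rw [Fintype.sum_bool, add_comm]
      _ = _ := by
          rw [Fintype.sum_bool, Fin.sum_univ_two,
            main_pointwise G v A hA true x y, main_pointwise G v A hA false x y]
          simp only [outer, Matrix.cons_val_zero, Matrix.cons_val_one, Matrix.head_cons]
          push_cast
          ring

end AuxStmt11b

/-- Let `G` be a tree, `R ≠ j`, and `v ∉ {R, j}` a vertex on the (unique)
path from `R` to `j`.  Then, after deleting `v`, the vertex `j` does not lie in the
connected component `C_R` of `R`, and the reduced state `Tr_v(|G⟩⟨G|)` is separable with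
respect to the bipartition `(C_R, V∖({v}∪C_R))`. -/
theorem stmt11 {V : Type*} [Fintype V] [DecidableEq V]
    (G : SimpleGraph V) [DecidableRel G.Adj] (hT : G.IsTree)
    (R j v : V) (hRj : R ≠ j) (hRv : R ≠ v) (hjv : j ≠ v)
    (p : G.Walk R j) (hp : p.IsPath) (hv : v ∈ p.support) :
    (¬ (inducedSub G (· ≠ v)).Reachable ⟨R, hRv⟩ ⟨j, hjv⟩) ∧
      SeparableWrt
        {t : {u : V // u ≠ v} | (inducedSub G (· ≠ v)).Reachable ⟨R, hRv⟩ t}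
        (ptraceKeep (· ≠ v) (outer (graphState G) (graphState G))) := by
  classical
  have part1 : ¬ (inducedSub G (· ≠ v)).Reachable ⟨R, hRv⟩ ⟨j, hjv⟩ := by
    intro hreach
    obtain ⟨q⟩ := hreach
    let f : inducedSub G (· ≠ v) →g G :=
      ⟨Subtype.val, fun {a b} h => h⟩
    let q' : G.Walk R j := q.map f
    have hsup : v ∉ q'.support := by
      intro hvs
      rw [SimpleGraph.Walk.support_map] at hvs
      obtain ⟨t, _, ht⟩ := List.mem_map.mp hvs
      exact t.2 ht
    obtain ⟨p₀, -, hup⟩ := hT.existsUnique_path R j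
    have h1 : p = q'.bypass := (hup p hp).trans (hup q'.bypass q'.bypass_isPath).symm
    exact hsup (q'.support_bypass_subset (h1 ▸ hv))
  refine ⟨part1, separable_of_compat G v _ ?_⟩
  intro a c ha hc hadj
  have hind : (inducedSub G (· ≠ v)).Adj ⟨a, ha⟩ ⟨c, hc⟩ := hadj
  exact ⟨fun h => h.trans hind.reachable, fun h => h.trans hind.symm.reachable⟩
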